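/- Let A ≠ 0, B ≠ 0, C ∈ ℝ, a = (1/B)·e^{W(-B·C·e^{1/A}/A) - 1/A} with B·a > 0, and f(y) = (A·y·ln(B·y) + y + C)·e^y. If W(-B·C·e^{1/A}/A) ≠ -1, then f'(a) = A·e^{a}·(W(-B·C·e^{1/A}/A) + 1) ≠ 0. -/

import Mathlib

/-- Let `A ≠ 0`, `B ≠ 0`, `W₀` with `W₀·e^(W₀) = -B·C·e^(1/A)/A`,
`a = (1/B)·e^(W₀ - 1/A)` with `B·a > 0`, and `f'(y) =
(A·(y+1)·ln(B·y) + y + A + C + 1)·e^y`. If `W₀ ≠ -1` then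
`f'(a) = A·e^a·(W₀ + 1) ≠ 0`. -/
theorem deriv_at_zero_nonzero (A B C W₀ : ℝ) (hA : A ≠ 0) (hB : B ≠ 0)
    (hW : W₀ * Real.exp W₀ = -B * C * Real.exp (1 / A) / A) (hW1 : W₀ ≠ -1)
    (a : ℝ) (ha : a = (1 / B) * Real.exp (W₀ - 1 / A)) (hBa : 0 < B * a) :
    (A * (a + 1) * Real.log (B * a) + a + A + C + 1) * Real.exp a =
        A * Real.exp a * (W₀ + 1) ∧
      A * Real.exp a * (W₀ + 1) ≠ 0 := by
  have hBa' : B * a = Real.exp (W₀ - 1 / A) := by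
    rw [ha]; field_simp
  have hlog : Real.log (B * a) = W₀ - 1 / A := by
    rw [hBa', Real.log_exp]
  have hexp : Real.exp (W₀ - 1 / A) = Real.exp W₀ / Real.exp (1 / A) := by
    rw [Real.exp_sub]
  have he1 : Real.exp (1 / A) ≠ 0 := Real.exp_ne_zero _
  have hW' : A * (W₀ * Real.exp W₀) = -B * C * Real.exp (1 / A) := by
    rw [hW]; field_simp
  have key : A * a * W₀ = -C := by
    have h1 : B * a = Real.exp W₀ / Real.exp (1 / A) := by rw [hBa', hexp]
    have h2 : A * (B * a) * W₀ = -B * C := by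
      rw [h1]
      field_simp
      linear_combination hW'
    have := mul_left_cancel₀ hB (by nlinarith [h2] : B * (A * a * W₀) = B * (-C))
    exact this
  constructor
  · rw [hlog]
    field_simp
    linear_combination key
  · have h3 : W₀ + 1 ≠ 0 := by intro h; apply hW1; linarith
    exact mul_ne_zero (mul_ne_zero hA (Real.exp_ne_zero a)) h3
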